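/- With p > 1, q = p/(p-1), and G̃_p the normalized generalized Gaussian, the p-Fisher information satisfies I_p(G̃_p) = n/p, where I_p(u) = (p-1)^p ∫_{ℝⁿ} |∇u|^p/u dx. -/

import Mathlib

open MeasureTheory

/-- Normalizing constant of the generalized Gaussian. -/
noncomputable def Cpn (n : ℕ) (p q : ℝ) : ℝ :=
  (p ^ (1 / p) * q ^ (1 / q)) ^ (-(n : ℝ)) * Real.pi ^ (-(n : ℝ) / 2) *
    (Real.Gamma ((n : ℝ) / 2 + 1) / Real.Gamma ((n : ℝ) / q + 1))

/-- The generalized Gaussian profile of the fundamental solution of the p-heat equation. -/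
noncomputable def Gp (n : ℕ) (p q : ℝ) (x : EuclideanSpace ℝ (Fin n)) : ℝ :=
  (Cpn n p q * Real.exp (-((p - 1) / p ^ q) * ‖x‖ ^ q)) ^ (1 / (p - 1))

open Real


lemma Cpn_pos (n : ℕ) (p q : ℝ) (hp : 0 < p) (hq : 0 < q) : 0 < Cpn n p q := by
  have h1 : 0 < Real.Gamma ((n:ℝ)/2 + 1) := Real.Gamma_pos_of_pos (by positivity)
  have h2 : 0 < Real.Gamma ((n:ℝ)/q + 1) := Real.Gamma_pos_of_pos (by positivity)
  have := Real.pi_pos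
  unfold Cpn
  positivity

section
variable (n : ℕ) (p q : ℝ) (hp : 1 < p) (hq : q = p / (p - 1))

lemma Gp_eq (hp : 1 < p) (x : EuclideanSpace ℝ (Fin n)) (hq : 0 < q) :
    Gp n p q x = (Cpn n p q) ^ (1/(p-1)) * Real.exp (-(1 / p ^ q) * ‖x‖ ^ q) := by
  have hp1 : (0:ℝ) < p - 1 := by linarith
  have hC := Cpn_pos n p q (by linarith) hq
  rw [Gp, Real.mul_rpow hC.le (Real.exp_nonneg _), ← Real.exp_mul]
  congr 2
  have hpq : (0:ℝ) < p ^ q := Real.rpow_pos_of_pos (by linarith) q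
  field_simp

lemma Gp_hasFDerivAt (hp : 1 < p) (hq : q = p / (p - 1)) (x : EuclideanSpace ℝ (Fin n)) :
    HasFDerivAt (Gp n p q)
      (((Cpn n p q) ^ (1/(p-1)) * Real.exp (-(1 / p ^ q) * ‖x‖ ^ q) * (-(1 / p ^ q))
        * (q * ‖x‖ ^ (q - 2))) • innerSL ℝ x) x := by
  have hp1 : (0:ℝ) < p - 1 := by linarith
  have hq1 : 1 < q := by
    rw [hq, lt_div_iff₀ hp1]; linarith
  have h1 := hasFDerivAt_norm_rpow x hq1
  have h2 := ((h1.const_mul (-(1 / p ^ q))).exp.const_mul ((Cpn n p q) ^ (1/(p-1))))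
  have hfun : (fun y : EuclideanSpace ℝ (Fin n) =>
      (Cpn n p q) ^ (1/(p-1)) * Real.exp (-(1 / p ^ q) * ‖y‖ ^ q)) = Gp n p q := by
    funext y; rw [Gp_eq n p q hp y (by linarith)]
  rw [hfun] at h2
  rw [smul_smul, smul_smul, smul_smul] at h2
  exact h2

lemma Gp_fderiv_norm (hp : 1 < p) (hq : q = p / (p - 1)) (x : EuclideanSpace ℝ (Fin n)) :
    ‖fderiv ℝ (Gp n p q) x‖ =
      (Cpn n p q) ^ (1/(p-1)) * Real.exp (-(1 / p ^ q) * ‖x‖ ^ q) * (1 / p ^ q)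
        * (q * ‖x‖ ^ (q - 2)) * ‖x‖ := by
  have hp1 : (0:ℝ) < p - 1 := by linarith
  have hq1 : 1 < q := by rw [hq, lt_div_iff₀ hp1]; linarith
  have hC := Cpn_pos n p q (by linarith) (by linarith)
  have hpq : (0:ℝ) < p ^ q := Real.rpow_pos_of_pos (by linarith) q
  rw [(Gp_hasFDerivAt n p q hp hq x).fderiv, norm_smul, Real.norm_eq_abs, innerSL_apply_norm]
  have h : (Cpn n p q) ^ (1/(p-1)) * Real.exp (-(1 / p ^ q) * ‖x‖ ^ q) * (-(1 / p ^ q))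
        * (q * ‖x‖ ^ (q - 2)) = -((Cpn n p q) ^ (1/(p-1)) * Real.exp (-(1 / p ^ q) * ‖x‖ ^ q) * (1 / p ^ q)
        * (q * ‖x‖ ^ (q - 2))) := by ring
  rw [h, abs_neg, abs_of_nonneg (by positivity)]

end


lemma integrand_calc (C b q p r : ℝ) (hp : 1 < p) (hq : q = p / (p-1)) (hC : 0 < C)
    (hb : 0 < b) (hr : 0 ≤ r) :
    (C ^ (1/(p-1)) * Real.exp (-b * r ^ q) * b * (q * r ^ (q - 2)) * r) ^ p
      / (C ^ (1/(p-1)) * Real.exp (-b * r ^ q))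
    = C * (b * q) ^ p * (r ^ q * Real.exp (-((p-1) * b) * r ^ q)) := by
  have hp1 : (0:ℝ) < p - 1 := by linarith
  have hp0 : (0:ℝ) < p := by linarith
  have hq1 : 1 < q := by rw [hq, lt_div_iff₀ hp1]; linarith
  have hpq : q * (p - 1) = p := by rw [hq]; field_simp
  have hK : (0:ℝ) < C ^ (1/(p-1)) := Real.rpow_pos_of_pos hC _
  have hE : (0:ℝ) < Real.exp (-b * r ^ q) := Real.exp_pos _
  have hrr : r ^ (q-2) * r = r ^ (q-1) := by
    rw [← Real.rpow_add_one' hr (by intro h; nlinarith : q - 2 + 1 ≠ 0)]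
    congr 1; ring
  have hre : C ^ (1/(p-1)) * Real.exp (-b * r ^ q) * b * (q * r ^ (q - 2)) * r
      = (C ^ (1/(p-1)) * Real.exp (-b * r ^ q) * (b * q)) * r ^ (q-1) := by
    rw [← hrr]; ring
  rw [hre, Real.mul_rpow (by positivity) (by positivity),
      Real.mul_rpow (by positivity) (by positivity),
      Real.mul_rpow hK.le hE.le]
  have h1 : (r ^ (q-1)) ^ p = r ^ q := by
    rw [← Real.rpow_mul hr, show (q-1)*p = q by nlinarith]
  have h2 : (C ^ (1/(p-1))) ^ p = C * C ^ (1/(p-1)) := by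
    rw [← Real.rpow_mul hC.le, show (1/(p-1))*p = 1 + 1/(p-1) by field_simp; ring,
      Real.rpow_add hC, Real.rpow_one]
  have h3 : (Real.exp (-b * r ^ q)) ^ p
      = Real.exp (-b * r ^ q) * Real.exp (-((p-1) * b) * r ^ q) := by
    rw [← Real.exp_mul, show -b * r^q * p = -b * r^q + -((p-1)*b) * r^q by ring, Real.exp_add]
  rw [h1, h2, h3]
  field_simp


lemma radial_int (n : ℕ) (hn : 1 ≤ n) (a q : ℝ) (ha : 0 < a) (hq : 1 < q) :
    ∫ x : EuclideanSpace ℝ (Fin n), ‖x‖ ^ q * Real.exp (-a * ‖x‖ ^ q) =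
      (n : ℝ) * (Real.sqrt Real.pi ^ n / Real.Gamma ((n:ℝ)/2 + 1)) *
        (a ^ (-((n:ℝ) + q)/q) * (1/q) * Real.Gamma ((n:ℝ)/q + 1)) := by
  haveI : Nonempty (Fin n) := Fin.pos_iff_nonempty.mp hn
  haveI : Nontrivial (EuclideanSpace ℝ (Fin n)) := by
    refine nontrivial_of_ne (EuclideanSpace.single ⟨0, hn⟩ 1) 0 fun h => ?_
    simpa using congrArg (fun v => v ⟨0, hn⟩) h
  have hn1 : (1:ℝ) ≤ (n:ℝ) := by exact_mod_cast hn
  have hq0 : (0:ℝ) < q := by linarith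
  rw [integral_fun_norm_addHaar (volume : Measure (EuclideanSpace ℝ (Fin n)))
    (fun y => y ^ q * Real.exp (-a * y ^ q))]
  have hdim : Module.finrank ℝ (EuclideanSpace ℝ (Fin n)) = n := finrank_euclideanSpace_fin
  rw [hdim]
  have hball : ((volume (Metric.ball (0 : EuclideanSpace ℝ (Fin n)) 1)).toReal)
      = Real.sqrt Real.pi ^ n / Real.Gamma ((n:ℝ)/2 + 1) := by
    rw [EuclideanSpace.volume_ball (Fin n) 0 1]
    have hΓ : 0 < Real.Gamma ((n:ℝ)/2 + 1) := Real.Gamma_pos_of_pos (by positivity)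
    simp [Fintype.card_fin, ENNReal.toReal_ofReal (by positivity : (0:ℝ) ≤ Real.sqrt Real.pi ^ n / Real.Gamma ((n:ℝ)/2 + 1))]
  rw [measureReal_def, hball]
  have hinner : (∫ y in Set.Ioi (0:ℝ), y ^ (n-1) • (y ^ q * Real.exp (-a * y ^ q)))
      = a ^ (-((n:ℝ) + q)/q) * (1/q) * Real.Gamma ((n:ℝ)/q + 1) := by
    have h1 : (∫ y in Set.Ioi (0:ℝ), y ^ (n-1) • (y ^ q * Real.exp (-a * y ^ q)))
        = ∫ y in Set.Ioi (0:ℝ), y ^ ((n:ℝ) - 1 + q) * Real.exp (-a * y ^ q) := by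
      refine setIntegral_congr_fun measurableSet_Ioi fun y hy => ?_
      have hy0 : (0:ℝ) < y := hy
      rw [smul_eq_mul, Real.rpow_add hy0, ← Real.rpow_natCast y (n-1),
        Nat.cast_sub hn, Nat.cast_one, mul_assoc]
    rw [h1, integral_rpow_mul_exp_neg_mul_rpow hq0 (by linarith) ha]
    rw [show (n:ℝ) - 1 + q + 1 = (n:ℝ) + q by ring]
    rw [show ((n:ℝ) + q)/q = (n:ℝ)/q + 1 by field_simp]
  rw [hinner, nsmul_eq_mul, smul_eq_mul]
  ring

lemma final_identity (n : ℕ) (hn : 1 ≤ n) (p q : ℝ) (hp : 1 < p) (hq : q = p/(p-1)) :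
    (p-1) ^ p * (Cpn n p q * (1/p^q * q) ^ p *
      ((n:ℝ) * (Real.sqrt Real.pi ^ n / Real.Gamma ((n:ℝ)/2 + 1)) *
        (((p-1) * (1/p^q)) ^ (-((n:ℝ)+q)/q) * (1/q) * Real.Gamma ((n:ℝ)/q + 1))))
    = (n:ℝ)/p := by
  have hp1 : (0:ℝ) < p - 1 := by linarith
  have hp0 : (0:ℝ) < p := by linarith
  have hq1 : 1 < q := by rw [hq, lt_div_iff₀ hp1]; linarith
  have hq0 : (0:ℝ) < q := by linarith
  have hpq : q * (p - 1) = p := by rw [hq]; field_simp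
  have hppq : (0:ℝ) < p ^ q := Real.rpow_pos_of_pos hp0 q
  have hπ := Real.pi_pos
  have hΓ2 : 0 < Real.Gamma ((n:ℝ)/2 + 1) := Real.Gamma_pos_of_pos (by positivity)
  have hΓq : 0 < Real.Gamma ((n:ℝ)/q + 1) := Real.Gamma_pos_of_pos (by positivity)
  -- π cancellation
  have h1 : Real.pi ^ (-(n:ℝ)/2) * Real.sqrt Real.pi ^ n = 1 := by
    rw [Real.sqrt_eq_rpow, ← Real.rpow_natCast (Real.pi ^ (1/2 : ℝ)) n,
      ← Real.rpow_mul hπ.le, ← Real.rpow_add hπ,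
      show -(n:ℝ)/2 + 1/2*(n:ℝ) = 0 by ring, Real.rpow_zero]
  -- (p-1)^p * (1/p^q*q)^p = p^(-q)
  have h2 : (p-1) ^ p * (1/p^q * q) ^ p = p ^ (-q) := by
    rw [← Real.mul_rpow hp1.le (by positivity)]
    have hbase : (p-1) * (1/p^q * q) = p ^ (1-q) := by
      rw [Real.rpow_sub hp0, Real.rpow_one]
      field_simp
      linarith [hpq]
    rw [hbase, ← Real.rpow_mul hp0.le, show (1-q)*p = -q by nlinarith]
  -- split a^e
  have h3 : ((p-1) * (1/p^q)) ^ (-((n:ℝ)+q)/q)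
      = (p-1) ^ (-(n:ℝ)/q) * (p-1)⁻¹ * p ^ ((n:ℝ)+q) := by
    rw [Real.mul_rpow hp1.le (by positivity), one_div,
      ← Real.rpow_neg_one (p^q), ← Real.rpow_mul hp0.le, ← Real.rpow_mul hp0.le,
      show q * -1 * (-((n:ℝ)+q)/q) = (n:ℝ)+q by field_simp,
      show (-((n:ℝ)+q)/q) = -(n:ℝ)/q + (-1) by field_simp; ring,
      Real.rpow_add hp1, Real.rpow_neg_one]
  -- split (p^{1/p} q^{1/q})^{-n}
  have h4 : (p ^ (1/p) * q ^ (1/q)) ^ (-(n:ℝ))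
      = p ^ (-(n:ℝ)/p) * q ^ (-(n:ℝ)/q) := by
    rw [Real.mul_rpow (by positivity) (by positivity),
      ← Real.rpow_mul hp0.le, ← Real.rpow_mul hq0.le]
    congr 1 <;> ring
  -- q and (p-1) merge
  have h5 : q ^ (-(n:ℝ)/q) * (p-1) ^ (-(n:ℝ)/q) = p ^ (-(n:ℝ)/q) := by
    rw [← Real.mul_rpow hq0.le hp1.le, hpq]
  -- p powers collapse
  have h6 : p ^ (-q) * (p ^ (-(n:ℝ)/p) * p ^ (-(n:ℝ)/q)) * p ^ ((n:ℝ)+q) = 1 := by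
    rw [← Real.rpow_add hp0, ← Real.rpow_add hp0, ← Real.rpow_add hp0]
    have hnpq : (n:ℝ)/p + (n:ℝ)/q = n := by
      rw [div_add_div _ _ (ne_of_gt hp0) (ne_of_gt hq0), div_eq_iff (by positivity)]
      linear_combination (-(n:ℝ)) * hpq
    rw [show -q + (-(n:ℝ)/p + -(n:ℝ)/q) + ((n:ℝ)+q) = (n:ℝ) - ((n:ℝ)/p + (n:ℝ)/q) by ring,
      hnpq, sub_self, Real.rpow_zero]
  calc (p-1) ^ p * (Cpn n p q * (1/p^q * q) ^ p *
      ((n:ℝ) * (Real.sqrt Real.pi ^ n / Real.Gamma ((n:ℝ)/2 + 1)) *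
        (((p-1) * (1/p^q)) ^ (-((n:ℝ)+q)/q) * (1/q) * Real.Gamma ((n:ℝ)/q + 1))))
      = ((p-1) ^ p * (1/p^q * q) ^ p) * ((p ^ (1/p) * q ^ (1/q)) ^ (-(n:ℝ)))
        * (Real.pi ^ (-(n:ℝ)/2) * Real.sqrt Real.pi ^ n)
        * (Real.Gamma ((n:ℝ)/2 + 1) / Real.Gamma ((n:ℝ)/q + 1) * Real.Gamma ((n:ℝ)/q + 1)
            / Real.Gamma ((n:ℝ)/2 + 1))
        * (n:ℝ) * (((p-1) * (1/p^q)) ^ (-((n:ℝ)+q)/q)) * (1/q) := by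
        rw [Cpn]; ring
    _ = p ^ (-q) * (p ^ (-(n:ℝ)/p) * q ^ (-(n:ℝ)/q)) * 1 * 1
        * (n:ℝ) * ((p-1) ^ (-(n:ℝ)/q) * (p-1)⁻¹ * p ^ ((n:ℝ)+q)) * (1/q) := by
        rw [h1, h2, h3, h4]
        congr 2
        field_simp
    _ = (p ^ (-q) * (p ^ (-(n:ℝ)/p) * p ^ (-(n:ℝ)/q)) * p ^ ((n:ℝ)+q))
        * (n:ℝ) * (p-1)⁻¹ * (1/q) := by
        rw [← h5]; ring
    _ = (n:ℝ)/p := by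
        rw [h6, one_mul, one_div]
        conv_rhs => rw [← hpq]
        rw [eq_div_iff (mul_pos hq0 hp1).ne']
        field_simp

theorem pFisher_Gp (n : ℕ) (hn : 1 ≤ n) (p q : ℝ) (hp : 1 < p)
    (hq : q = p / (p - 1)) :
    (p - 1) ^ p * ∫ x, ‖fderiv ℝ (Gp n p q) x‖ ^ p / Gp n p q x = (n : ℝ) / p := by
  have hp1 : (0:ℝ) < p - 1 := by linarith
  have hp0 : (0:ℝ) < p := by linarith
  have hq1 : 1 < q := by rw [hq, lt_div_iff₀ hp1]; linarith
  have hq0 : (0:ℝ) < q := by linarith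
  have hppq : (0:ℝ) < p ^ q := Real.rpow_pos_of_pos hp0 q
  have hC := Cpn_pos n p q hp0 hq0
  have ha : (0:ℝ) < (p-1) * (1/p^q) := by positivity
  have hpt : ∀ x : EuclideanSpace ℝ (Fin n),
      ‖fderiv ℝ (Gp n p q) x‖ ^ p / Gp n p q x
        = Cpn n p q * (1/p^q * q) ^ p *
            (‖x‖ ^ q * Real.exp (-((p-1) * (1/p^q)) * ‖x‖ ^ q)) := by
    intro x
    rw [Gp_fderiv_norm n p q hp hq x, Gp_eq n p q hp x hq0]
    exact integrand_calc (Cpn n p q) (1/p^q) q p ‖x‖ hp hq hC (by positivity) (norm_nonneg x)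
  simp_rw [hpt]
  rw [MeasureTheory.integral_const_mul, radial_int n hn ((p-1) * (1/p^q)) q ha hq1]
  exact final_identity n hn p q hp hq
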